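/- A residuated lattice A is both quasicomplemented and disjunctive if and only if its underlying bounded lattice is a Boolean lattice. -/
import Mathlib


/-- A (bounded, integral, commutative) residuated lattice. -/
class ResLattice (A : Type*) extends Lattice A, CommMonoid A, OrderBot A where
  himp : A → A → A
  adjunction : ∀ x y z : A, x * y ≤ z ↔ x ≤ himp y z
  le_one : ∀ x : A, x ≤ 1

variable {A : Type*} [ResLattice A]

/-- Coannihilator of a subset: `X^⊥ = {a | a ⊔ x = 1 for all x ∈ X}`. -/
def Coann (X : Set A) : Set A := {a | ∀ x ∈ X, a ⊔ x = 1}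

/-- Coannulet of an element: `x^⊥`. -/
def rperp (x : A) : Set A := Coann {x}

/-- The principal filter generated by `x`. -/
def PFil (x : A) : Set A := {a | ∃ n : ℕ, 0 < n ∧ x ^ n ≤ a}

/-- Filters of a residuated lattice. -/
def IsRLFilter (F : Set A) : Prop :=
  F.Nonempty ∧ (∀ x ∈ F, ∀ y ∈ F, x * y ∈ F) ∧ (∀ x ∈ F, ∀ y : A, x ⊔ y ∈ F)

/-- Prime filters. -/
def IsRLPrime (P : Set A) : Prop :=
  IsRLFilter P ∧ P ≠ Set.univ ∧ ∀ x y : A, x ⊔ y ∈ P → x ∈ P ∨ y ∈ P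

/-- Minimal prime filters. -/
def IsRLMinPrime (P : Set A) : Prop :=
  IsRLPrime P ∧ ∀ Q : Set A, IsRLPrime Q → Q ⊆ P → Q = P

/-- Quasicomplemented residuated lattice. -/
def Quasicomplemented (A : Type*) [ResLattice A] : Prop :=
  ∀ x : A, ∃ y : A, Coann (rperp x) = rperp y

/-- α-filters. -/
def IsAlphaFilter (F : Set A) : Prop :=
  IsRLFilter F ∧ ∀ x ∈ F, Coann (rperp x) ⊆ F

/-- The α-filter generated by a subset. -/
def alphaGen (X : Set A) : Set A := ⋂₀ {G : Set A | IsAlphaFilter G ∧ X ⊆ G}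

section Aux

lemma mem_rperp {a x : A} : a ∈ rperp x ↔ a ⊔ x = 1 := by
  simp [rperp, Coann]

lemma aux_le_one (x : A) : x ≤ 1 := ResLattice.le_one x

lemma aux_mul_le_mul {a b : A} (h : a ≤ b) (c : A) : a * c ≤ b * c :=
  (ResLattice.adjunction a c (b * c)).2
    (le_trans h ((ResLattice.adjunction b c (b * c)).1 le_rfl))

lemma aux_mul_le_left (a b : A) : a * b ≤ a := by
  have h : b * a ≤ 1 * a := aux_mul_le_mul (aux_le_one b) a
  rwa [one_mul, mul_comm] at h

lemma aux_mul_le_right (a b : A) : a * b ≤ b := by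
  rw [mul_comm]; exact aux_mul_le_left b a

lemma aux_mul_sup (a b c : A) : a * (b ⊔ c) = a * b ⊔ a * c := by
  apply le_antisymm
  · rw [mul_comm]
    refine (ResLattice.adjunction (b ⊔ c) a (a * b ⊔ a * c)).2 (sup_le ?_ ?_)
    · exact (ResLattice.adjunction b a (a * b ⊔ a * c)).1
        (le_trans (le_of_eq (mul_comm b a)) le_sup_left)
    · exact (ResLattice.adjunction c a (a * b ⊔ a * c)).1
        (le_trans (le_of_eq (mul_comm c a)) le_sup_right)
  · refine sup_le ?_ ?_
    · rw [mul_comm a b, mul_comm a (b ⊔ c)]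
      exact aux_mul_le_mul le_sup_left a
    · rw [mul_comm a c, mul_comm a (b ⊔ c)]
      exact aux_mul_le_mul le_sup_right a

lemma aux_sup_eq_one_of_le {a x y : A} (h : a ⊔ x = 1) (hxy : x ≤ y) :
    a ⊔ y = 1 :=
  le_antisymm (aux_le_one _) (h ▸ sup_le_sup_left hxy a)

lemma aux_rperp_mul (x y : A) : rperp (x * y) = rperp x ∩ rperp y := by
  ext a
  simp only [Set.mem_inter_iff, mem_rperp]
  constructor
  · intro h
    exact ⟨aux_sup_eq_one_of_le h (aux_mul_le_left x y),
           aux_sup_eq_one_of_le h (aux_mul_le_right x y)⟩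
  · rintro ⟨h1, h2⟩
    have key : (1 : A) = (a ⊔ x) * (a ⊔ y) := by rw [h1, h2, one_mul]
    have expand : (a ⊔ x) * (a ⊔ y) ≤ a ⊔ x * y := by
      rw [aux_mul_sup, mul_comm (a ⊔ x) a, aux_mul_sup, mul_comm (a ⊔ x) y, aux_mul_sup]
      refine sup_le (sup_le ?_ ?_) (sup_le ?_ ?_)
      · exact le_trans (aux_mul_le_left a a) le_sup_left
      · exact le_trans (aux_mul_le_left a x) le_sup_left
      · exact le_trans (aux_mul_le_right y a) le_sup_left
      · exact le_trans (le_of_eq (mul_comm y x)) le_sup_right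
    exact le_antisymm (aux_le_one _) (key ▸ expand)

lemma aux_rperp_inf (x y : A) : rperp (x ⊓ y) = rperp x ∩ rperp y := by
  ext a
  simp only [Set.mem_inter_iff, mem_rperp]
  constructor
  · intro h
    exact ⟨aux_sup_eq_one_of_le h inf_le_left, aux_sup_eq_one_of_le h inf_le_right⟩
  · rintro ⟨h1, h2⟩
    have h : a ⊔ x * y = 1 := by
      have := aux_rperp_mul x y
      have ha : a ∈ rperp x ∩ rperp y := ⟨mem_rperp.2 h1, mem_rperp.2 h2⟩
      rw [← this] at ha
      exact mem_rperp.1 ha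
    exact aux_sup_eq_one_of_le h (le_inf (aux_mul_le_left x y) (aux_mul_le_right x y))

lemma aux_mul_eq_inf (hinj : Function.Injective (rperp : A → Set A)) (x y : A) :
    x * y = x ⊓ y :=
  hinj (by rw [aux_rperp_mul, aux_rperp_inf])

end Aux

theorem stmt7 :
    (Quasicomplemented A ∧ Function.Injective (rperp : A → Set A)) ↔
      ((∀ x y z : A, x ⊓ (y ⊔ z) = (x ⊓ y) ⊔ (x ⊓ z)) ∧
        ∀ a : A, ∃ b : A, a ⊓ b = ⊥ ∧ a ⊔ b = 1) := by
  constructor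
  · rintro ⟨hqc, hinj⟩
    constructor
    · -- distributivity: the lattice is Heyting since * = ⊓
      intro x y z
      apply le_antisymm
      · have h1 : x ⊓ (y ⊔ z) = (y ⊔ z) * x := by
          rw [aux_mul_eq_inf hinj, inf_comm]
        rw [h1]
        refine (ResLattice.adjunction (y ⊔ z) x ((x ⊓ y) ⊔ (x ⊓ z))).2 (sup_le ?_ ?_)
        · refine (ResLattice.adjunction y x ((x ⊓ y) ⊔ (x ⊓ z))).1 ?_
          rw [aux_mul_eq_inf hinj, inf_comm]
          exact le_sup_left
        · refine (ResLattice.adjunction z x ((x ⊓ y) ⊔ (x ⊓ z))).1 ?_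
          rw [aux_mul_eq_inf hinj, inf_comm]
          exact le_sup_right
      · exact sup_le (le_inf inf_le_left (le_trans inf_le_right le_sup_left))
          (le_inf inf_le_left (le_trans inf_le_right le_sup_right))
    · -- complements
      intro x
      obtain ⟨y, hy⟩ := hqc x
      refine ⟨y, ?_, ?_⟩
      · -- x ⊓ y = ⊥
        apply hinj
        rw [aux_rperp_inf]
        ext a
        simp only [Set.mem_inter_iff, mem_rperp]
        constructor
        · rintro ⟨hax, hay⟩
          have haCy : a ∈ rperp y := mem_rperp.2 hay
          rw [← hy] at haCy
          have haa : a ⊔ a = 1 := haCy a (mem_rperp.2 hax)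
          simp only [sup_idem] at haa
          simp [haa]
        · intro h
          simp only [sup_bot_eq] at h
          subst h
          exact ⟨le_antisymm (aux_le_one _) le_sup_left,
                 le_antisymm (aux_le_one _) le_sup_left⟩
      · -- x ⊔ y = 1
        have hx : x ∈ Coann (rperp x) := by
          intro a ha
          rw [sup_comm]
          exact mem_rperp.1 ha
        rw [hy] at hx
        exact mem_rperp.1 hx
  · rintro ⟨hd, hc⟩
    -- key: if (a, b) are complements and c ⊔ a = 1 then b ≤ c
    have key : ∀ a b c : A, a ⊓ b = ⊥ → c ⊔ a = 1 → b ≤ c := by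
      intro a b c hab hca
      have hb1 : b = b ⊓ (c ⊔ a) := by
        rw [hca]; exact le_antisymm (le_inf le_rfl (aux_le_one b)) inf_le_left
      calc b = b ⊓ c ⊔ b ⊓ a := by rw [← hd b c a, ← hb1]
           _ = b ⊓ c := by rw [inf_comm b a, hab, sup_bot_eq]
           _ ≤ c := inf_le_right
    -- rperp x = Ici b for b a complement of x
    have hperp : ∀ x b : A, x ⊓ b = ⊥ → x ⊔ b = 1 → rperp x = Set.Ici b := by
      intro x b hib hsb
      ext c
      simp only [mem_rperp, Set.mem_Ici]
      constructor
      · intro hcx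
        exact key x b c hib hcx
      · intro hbc
        refine le_antisymm (aux_le_one _) ?_
        calc (1 : A) = x ⊔ b := hsb.symm
          _ ≤ c ⊔ x := by rw [sup_comm x b]; exact sup_le_sup_right hbc x
    constructor
    · -- quasicomplemented
      intro x
      obtain ⟨b, hib, hsb⟩ := hc x
      refine ⟨b, ?_⟩
      ext c
      simp only [mem_rperp]
      constructor
      · intro hC
        exact hC b (mem_rperp.2 (by rw [sup_comm]; exact hsb))
      · intro hcb a ha
        rw [hperp x b hib hsb] at ha
        refine le_antisymm (aux_le_one _) ?_
        calc (1 : A) = c ⊔ b := hcb.symm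
          _ ≤ c ⊔ a := sup_le_sup_left ha c
    · -- injectivity
      intro u v huv
      obtain ⟨bu, hiu, hsu⟩ := hc u
      obtain ⟨bv, hiv, hsv⟩ := hc v
      have h1 : Set.Ici bu = Set.Ici bv := by
        rw [← hperp u bu hiu hsu, ← hperp v bv hiv hsv, huv]
      have hb : bu = bv := by
        have h2 : bv ≤ bu := by
          have : bu ∈ Set.Ici bv := by rw [← h1]; exact Set.self_mem_Ici
          exact Set.mem_Ici.1 this
        have h3 : bu ≤ bv := by
          have : bv ∈ Set.Ici bu := by rw [h1]; exact Set.self_mem_Ici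
          exact Set.mem_Ici.1 this
        exact le_antisymm h3 h2
      have huv' : u ≤ v := by
        have h2 : v ⊔ bu = 1 := by rw [hb]; exact hsv
        calc u = u ⊓ (v ⊔ bu) := by
              rw [h2]; exact le_antisymm (le_inf le_rfl (aux_le_one u)) inf_le_left
          _ = u ⊓ v ⊔ u ⊓ bu := hd u v bu
          _ = u ⊓ v := by rw [hiu, sup_bot_eq]
          _ ≤ v := inf_le_right
      have hvu' : v ≤ u := by
        have h2 : u ⊔ bv = 1 := by rw [← hb]; exact hsu
        calc v = v ⊓ (u ⊔ bv) := by
              rw [h2]; exact le_antisymm (le_inf le_rfl (aux_le_one v)) inf_le_left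
          _ = v ⊓ u ⊔ v ⊓ bv := hd v u bv
          _ = v ⊓ u := by rw [hiv, sup_bot_eq]
          _ ≤ u := inf_le_right
      exact le_antisymm huv' hvu'
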